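/- Let κ be a fixed point of the aleph hierarchy and let G be a connected κ-regular graph with vertex set enumerated as (x_i)_{i<κ}. Suppose each vertex x_i is assigned a 2-colouring of its incident edges in which exactly ℵ_i of them are blue. Then every colour-preserving automorphism of G fixes every vertex; i.e., the colouring is distinguishing. -/
import Mathlib


open Cardinal

universe u

/-- Let `κ = ℵ_κ` be a fixed point of the aleph hierarchy and `G` a connected
`κ`-regular graph with vertex set enumerated as `(x_i)_{i < κ}`.  If each vertex `x_i`
is incident to exactly `ℵ_i` blue edges (in a 2-colouring by `blue = true` and
`green = false`), then every colour-preserving automorphism of `G` fixes every vertex. -/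
theorem distinct_blue_degrees_distinguishing {V : Type u} (G : SimpleGraph V)
    (κ : Cardinal.{u}) (hfix : Cardinal.aleph κ.ord = κ) (hconn : G.Connected)
    (hreg : ∀ v : V, #(G.incidenceSet v) = κ)
    (x : {o : Ordinal.{u} // o < κ.ord} → V) (hx : Function.Bijective x)
    (c : G.edgeSet → Bool)
    (hblue : ∀ i : {o : Ordinal.{u} // o < κ.ord},
      #{e : G.edgeSet // x i ∈ e.val ∧ c e = true} = Cardinal.aleph i.val) :
    ∀ γ : G ≃g G, (∀ e : G.edgeSet, c (γ.mapEdgeSet e) = c e) → ∀ v : V, γ v = v := by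
  intro γ hc v
  obtain ⟨i, rfl⟩ := hx.surjective v
  obtain ⟨j, hj⟩ := hx.surjective (γ (x i))
  -- bijection between blue edges at x i and blue edges at x j
  have hmem : ∀ e : G.edgeSet, (x i ∈ e.val ∧ c e = true) ↔
      (x j ∈ (γ.mapEdgeSet e).val ∧ c (γ.mapEdgeSet e) = true) := by
    intro e
    rw [hc e, hj]
    constructor
    · rintro ⟨he, hce⟩
      refine ⟨?_, hce⟩
      exact Sym2.mem_map.mpr ⟨x i, he, rfl⟩
    · rintro ⟨he, hce⟩
      refine ⟨?_, hce⟩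
      obtain ⟨a, ha, hab⟩ := Sym2.mem_map.mp he
      rwa [γ.injective hab] at ha
  have hcard : #{e : G.edgeSet // x i ∈ e.val ∧ c e = true}
      = #{e : G.edgeSet // x j ∈ e.val ∧ c e = true} := by
    exact Cardinal.mk_congr (γ.mapEdgeSet.subtypeEquiv hmem)
  rw [hblue i, hblue j] at hcard
  have hij : i = j := by
    apply Subtype.ext
    exact le_antisymm (Cardinal.aleph_le_aleph.mp hcard.le)
      (Cardinal.aleph_le_aleph.mp hcard.ge)
  rw [← hj, ← hij]
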